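/- Let Q(0,b,c) be the algebra over a field 𝕜 of characteristic zero generated by x and y with relation yx = bxy + cy² where b ≠ 0. Then σ(x) := bx extends to an automorphism σ of 𝕜[x], δ(x) := c extends to a σ-derivation δ of 𝕜[x] that is locally nilpotent, and Q(0,b,c) is isomorphic to the skew Ore polynomial ring 𝕜[x](y;σ,δ) with commutation rule yp = σ(p)y + yδ(p)y for p ∈ 𝕜[x]. -/

import Mathlib

open MulOpposite Polynomial

/-- The skew Ore polynomial ring `A = R(x;σ,δ)` of Higuera–Reyes. -/
structure SkewOreRing (R A : Type*) [Ring R] [Ring A] (σ : R ≃+* R) (δ : R → R) where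
  φ : R →+* A
  x : A
  deriv_add : ∀ r s : R, δ (r + s) = δ r + δ s
  deriv_mul : ∀ r s : R, δ (r * s) = σ r * δ s + δ r * s
  locNilp : ∀ r : R, ∃ n : ℕ, 1 ≤ n ∧ δ^[n] r = 0
  basis : Function.Bijective
    (fun f : ℕ →₀ R => f.sum fun k r => φ r * x ^ k)
  comm : ∀ (r : R) (n : ℕ), δ^[n] r = 0 →
    x * φ r = ∑ i ∈ Finset.range n, φ (σ (δ^[i] r)) * x ^ (i + 1)

/-- The defining relation `y·x = b·x·y + c·y²` of the algebra `Q(0,b,c)` of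
Golovashkin–Maksimov, on the free algebra on the two generators `x = ι 0`,
`y = ι 1`. -/
def qRel (𝕜 : Type*) [Field 𝕜] (b c : 𝕜) :
    FreeAlgebra 𝕜 (Fin 2) → FreeAlgebra 𝕜 (Fin 2) → Prop :=
  fun p q => p = FreeAlgebra.ι 𝕜 1 * FreeAlgebra.ι 𝕜 0 ∧
    q = algebraMap 𝕜 _ b * (FreeAlgebra.ι 𝕜 0 * FreeAlgebra.ι 𝕜 1) +
        algebraMap 𝕜 _ c * (FreeAlgebra.ι 𝕜 1 * FreeAlgebra.ι 𝕜 1)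


section Aux
variable {𝕜 : Type*} [Field 𝕜]

noncomputable def gs (b : 𝕜) (n : ℕ) : 𝕜 := ∑ i ∈ Finset.range n, b ^ i

lemma gs_succ (b : 𝕜) (n : ℕ) : gs b (n + 1) = gs b n + b ^ n := by
  rw [gs, Finset.sum_range_succ, ← gs]

lemma gs_add (b : 𝕜) (m n : ℕ) : gs b (m + n) = gs b m + b ^ m * gs b n := by
  induction n with
  | zero => simp [gs]
  | succ n ih =>
    rw [← add_assoc, gs_succ, ih, gs_succ]
    ring

lemma gs_mul (b : 𝕜) (n : ℕ) : (b - 1) * gs b n = b ^ n - 1 := by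
  rw [gs, mul_geom_sum]

noncomputable def sg (b : 𝕜) : Polynomial 𝕜 →ₐ[𝕜] Polynomial 𝕜 := aeval (C b * X)

lemma sg_comp (b b' : 𝕜) (h : b * b' = 1) : (sg b').comp (sg b) = AlgHom.id 𝕜 _ := by
  apply Polynomial.algHom_ext
  simp [sg, ← mul_assoc, ← C_mul, h]

noncomputable def sigma (b : 𝕜) (hb : b ≠ 0) : Polynomial 𝕜 ≃ₐ[𝕜] Polynomial 𝕜 :=
  AlgEquiv.ofAlgHom (sg b) (sg b⁻¹)
    (sg_comp b⁻¹ b (by field_simp)) (sg_comp b b⁻¹ (by field_simp))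

lemma sigma_monomial (b : 𝕜) (hb : b ≠ 0) (m : ℕ) (a : 𝕜) :
    sigma b hb (monomial m a) = C (a * b ^ m) * X ^ m := by
  show sg b _ = _
  rw [sg, aeval_monomial, mul_pow, ← C_pow, algebraMap_eq, ← mul_assoc, ← C_mul]

lemma sigma_X (b : 𝕜) (hb : b ≠ 0) : sigma b hb X = C b * X := by
  show sg b X = _; rw [sg, aeval_X]

lemma sigma_C (b : 𝕜) (hb : b ≠ 0) (a : 𝕜) : sigma b hb (C a) = C a := by
  show sg b (C a) = _; rw [sg, aeval_C, algebraMap_eq]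

noncomputable def del (b c : 𝕜) : Polynomial 𝕜 →ₗ[𝕜] Polynomial 𝕜 :=
  (Finsupp.lsum 𝕜 fun n => LinearMap.toSpanSingleton 𝕜 _ (C (c * gs b n) * X ^ (n - 1))).comp
    ((AddMonoidAlgebra.coeffLinearEquiv 𝕜).toLinearMap.comp (toFinsuppIsoAlg 𝕜).toLinearMap)

lemma del_monomial (b c : 𝕜) (n : ℕ) (a : 𝕜) :
    del b c (monomial n a) = C (a * c * gs b n) * X ^ (n - 1) := by
  have h1 : AddMonoidAlgebra.coeffLinearEquiv 𝕜 ((toFinsuppIsoAlg 𝕜) (monomial n a)) = Finsupp.single n a := by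
    simp [toFinsuppIsoAlg, toFinsuppIso, toFinsupp_monomial, AddMonoidAlgebra.coeffLinearEquiv_apply]
  rw [del, LinearMap.comp_apply]
  refine Eq.trans (congrArg _ h1) ?_
  rw [Finsupp.lsum_single, LinearMap.toSpanSingleton_apply,
    smul_eq_C_mul, ← mul_assoc, ← C_mul, mul_assoc]

lemma del_C (b c a : 𝕜) : del b c (C a) = 0 := by
  rw [← monomial_zero_left, del_monomial]; simp [gs]

lemma del_X (b c : 𝕜) : del b c X = C c := by
  rw [← monomial_one_one_eq_X, del_monomial]; simp [gs]

lemma del_one (b c : 𝕜) : del b c 1 = 0 := by rw [← C_1, del_C]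

lemma gs_zero (b : 𝕜) : gs b 0 = 0 := by simp [gs]
lemma gs_one (b : 𝕜) : gs b 1 = 1 := by simp [gs]

variable (b c : 𝕜) (hb : b ≠ 0)

lemma del_mul (p q : Polynomial 𝕜) :
    del b c (p * q) = sigma b hb p * del b c q + del b c p * q := by
  induction p using Polynomial.induction_on' with
  | add p1 p2 h1 h2 =>
    rw [add_mul, map_add, h1, h2, map_add, map_add]; ring
  | monomial m a =>
    induction q using Polynomial.induction_on' with
    | add q1 q2 h1 h2 =>
      rw [mul_add, map_add, h1, h2, map_add]; ring
    | monomial n a' =>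
      rw [monomial_mul_monomial, del_monomial, del_monomial, del_monomial, sigma_monomial,
        ← C_mul_X_pow_eq_monomial]
      cases n with
      | zero =>
        rw [Nat.add_zero, gs_zero]
        simp only [C_mul, mul_zero, C_0, zero_mul, pow_zero, C_1, mul_one]
        ring
      | succ n' =>
        cases m with
        | zero =>
          rw [Nat.zero_add, gs_zero]
          simp only [C_mul, C_0, zero_mul, mul_zero, pow_zero, C_1, mul_one]
          ring
        | succ m' =>
          have e1 : m' + 1 + (n' + 1) - 1 = (m' + 1) + n' := by omega
          have e2 : m' + 1 - 1 = m' := by omega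
          have e3 : n' + 1 - 1 = n' := by omega
          have hg := congrArg C (gs_add b (m' + 1) (n' + 1))
          simp only [C_add, C_mul, C_pow] at hg
          simp only [C_mul, C_pow]
          rw [e1, e2, e3, hg]
          ring

lemma key_identity (p : Polynomial 𝕜) :
    C c * (sigma b hb p - p) = (C b - 1) * (X * del b c p) := by
  induction p using Polynomial.induction_on' with
  | add p1 p2 h1 h2 =>
    rw [map_add, map_add]; linear_combination h1 + h2
  | monomial m a =>
    rw [sigma_monomial, del_monomial, ← C_mul_X_pow_eq_monomial]
    cases m with
    | zero => rw [gs_zero]; simp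
    | succ m' =>
      have e2 : m' + 1 - 1 = m' := by omega
      have hg := congrArg C (gs_mul b (m' + 1))
      rw [e2]
      simp only [C_sub, C_mul, C_pow, C_1] at hg
      simp only [C_mul, C_pow]
      linear_combination (-(C a * C c * X ^ (m' + 1))) * hg

lemma coeff_del (p : Polynomial 𝕜) (n : ℕ) :
    (del b c p).coeff n = c * gs b (n + 1) * p.coeff (n + 1) := by
  induction p using Polynomial.induction_on' with
  | add p q h1 h2 => rw [map_add, coeff_add, h1, h2, coeff_add]; ring
  | monomial m a =>
    rw [del_monomial, coeff_C_mul, coeff_X_pow, coeff_monomial]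
    rcases eq_or_ne m (n + 1) with rfl | hm
    · simp; ring
    · rw [if_neg hm, mul_zero]
      rcases Nat.eq_zero_or_pos m with rfl | hm0
      · simp [gs_zero]
      · rw [if_neg (by omega), mul_zero]

lemma natDegree_del_le (p : Polynomial 𝕜) (d : ℕ) (h : p.natDegree ≤ d + 1) :
    (del b c p).natDegree ≤ d := by
  rw [natDegree_le_iff_coeff_eq_zero]
  intro m hm
  rw [coeff_del, coeff_eq_zero_of_natDegree_lt (by omega), mul_zero]

lemma del_iterate_zero (d : ℕ) : ∀ p : Polynomial 𝕜, p.natDegree ≤ d → (del b c)^[d + 1] p = 0 := by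
  induction d with
  | zero =>
    intro p hp
    obtain ⟨a, ha⟩ := Polynomial.natDegree_eq_zero.mp (Nat.le_zero.mp hp)
    rw [Function.iterate_one, ← ha, del_C]
  | succ d ih =>
    intro p hp
    rw [Function.iterate_succ_apply]
    exact ih _ (natDegree_del_le b c p d hp)

lemma del_iterate_zero' (p : Polynomial 𝕜) : (del b c)^[p.natDegree + 1] p = 0 :=
  del_iterate_zero b c _ p le_rfl

lemma del_iterate_zero_of_le {p : Polynomial 𝕜} {m n : ℕ} (h : (del b c)^[m] p = 0)
    (hmn : m ≤ n) : (del b c)^[n] p = 0 := by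
  obtain ⟨k, rfl⟩ := Nat.exists_eq_add_of_le hmn
  rw [add_comm, Function.iterate_add_apply, h]
  exact Function.iterate_fixed (map_zero _) k

noncomputable abbrev Qmk := RingQuot.mkAlgHom 𝕜 (qRel 𝕜 b c)
noncomputable abbrev Xq : RingQuot (qRel 𝕜 b c) := Qmk b c (FreeAlgebra.ι 𝕜 0)
noncomputable abbrev Yq : RingQuot (qRel 𝕜 b c) := Qmk b c (FreeAlgebra.ι 𝕜 1)
noncomputable abbrev Psi : Polynomial 𝕜 →ₐ[𝕜] RingQuot (qRel 𝕜 b c) := aeval (Xq b c)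

noncomputable abbrev bq : RingQuot (qRel 𝕜 b c) := algebraMap 𝕜 _ b
noncomputable abbrev cq : RingQuot (qRel 𝕜 b c) := algebraMap 𝕜 _ c


lemma rel : Yq b c * Xq b c = b • (Xq b c * Yq b c) + c • (Yq b c * Yq b c) := by
  have h0 : qRel 𝕜 b c (FreeAlgebra.ι 𝕜 1 * FreeAlgebra.ι 𝕜 0)
      (algebraMap 𝕜 _ b * (FreeAlgebra.ι 𝕜 0 * FreeAlgebra.ι 𝕜 1) +
        algebraMap 𝕜 _ c * (FreeAlgebra.ι 𝕜 1 * FreeAlgebra.ι 𝕜 1)) := ⟨rfl, rfl⟩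
  have h1 := RingQuot.mkAlgHom_rel 𝕜 h0
  simp only [map_add, map_mul, AlgHom.commutes] at h1
  rw [h1, Algebra.smul_def, Algebra.smul_def]

lemma Psi_C (a : 𝕜) : Psi b c (C a) = algebraMap 𝕜 _ a := aeval_C _ _

lemma relT (t : RingQuot (qRel 𝕜 b c)) :
    Yq b c * (Xq b c * t) = b • (Xq b c * (Yq b c * t)) + c • (Yq b c * (Yq b c * t)) := by
  have h1 := congrArg (· * t) (rel b c)
  simpa only [add_mul, smul_mul_assoc, mul_assoc] using h1

lemma lemA (p : Polynomial 𝕜) :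
    Yq b c * Psi b c p =
      Psi b c (sigma b hb p) * Yq b c + (Yq b c * Psi b c (del b c p)) * Yq b c := by
  induction p using Polynomial.induction_on with
  | C a =>
    rw [sigma_C, del_C, map_zero, mul_zero, zero_mul, add_zero, Psi_C,
      Algebra.commutes]
  | add p q h1 h2 => simp only [map_add]; noncomm_ring [h1, h2]
  | monomial n a h =>
    have hX : (C a * X ^ (n + 1)) = X * (C a * X ^ n) := by ring
    rw [hX]
    set r := C a * X ^ n with hr
    set Y := Yq b c
    set Xv := Xq b c
    set A1 := Psi b c (sigma b hb r)
    set A2 := Psi b c r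
    set A3 := Psi b c (del b c r)
    have e1 : Psi b c (X * r) = Xv * A2 := by rw [map_mul, aeval_X]
    have hσ : Psi b c (sigma b hb (X * r)) = b • (Xv * A1) := by
      rw [map_mul, sigma_X]
      simp only [map_mul, Psi_C, aeval_X]
      rw [mul_assoc, ← Algebra.smul_def]
    have hδ : Psi b c (del b c (X * r)) = b • (Xv * A3) + c • A2 := by
      have hd : del b c (X * r) = C b * X * del b c r + C c * r := by
        rw [del_mul b c hb, sigma_X, del_X]
      rw [hd]
      simp only [map_add, map_mul, Psi_C, aeval_X]
      rw [mul_assoc, ← Algebra.smul_def, ← Algebra.smul_def]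
    have hkA : c • A1 = c • A2 + (b • (Xv * A3) - Xv * A3) := by
      have h1 := congrArg (Psi b c) (key_identity b c hb r)
      simp only [map_mul, map_sub, map_one, Psi_C, aeval_X] at h1
      have h2 : algebraMap 𝕜 _ c * A1 - algebraMap 𝕜 _ c * A2
          = algebraMap 𝕜 _ b * (Xv * A3) - Xv * A3 := by
        rw [← mul_sub, h1, sub_mul, one_mul]
      rw [Algebra.smul_def, Algebra.smul_def, Algebra.smul_def]
      rw [← h2]; abel
    have keyT : ∀ t, c • (Y * (A1 * t)) = c • (Y * (A2 * t)) +
        (((b*b) • (Xv * (Y * (A3 * t))) + (b*c) • (Y * (Y * (A3 * t)))) -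
          (b • (Xv * (Y * (A3 * t))) + c • (Y * (Y * (A3 * t))))) := by
      intro t
      have h3 := congrArg (fun w => Y * (w * t)) hkA
      simp only [smul_mul_assoc, mul_smul_comm, add_mul, sub_mul, mul_add, mul_sub,
        smul_add, smul_sub, mul_assoc] at h3
      rw [h3, relT b c (A3 * t)]
      simp only [smul_add, smul_smul]
      try noncomm_ring
    rw [e1, hσ, hδ, relT b c A2]
    rw [h]
    have expand : Y * (b • (Xv * A3) + c • A2) * Y
        = b • (Y * (Xv * (A3 * Y))) + c • (Y * (A2 * Y)) := by
      noncomm_ring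
    rw [expand, relT b c (A3 * Y)]
    simp only [Y, Xv] at keyT ⊢
    noncomm_ring [keyT, smul_smul, smul_add, smul_sub]

lemma commQ (n : ℕ) (p : Polynomial 𝕜) (hp : (del b c)^[n] p = 0) :
    Yq b c * Psi b c p
      = ∑ i ∈ Finset.range n, Psi b c (sigma b hb ((del b c)^[i] p)) * Yq b c ^ (i + 1) := by
  induction n generalizing p with
  | zero =>
    rw [Function.iterate_zero_apply] at hp
    simp [hp]
  | succ n ih =>
    rw [Function.iterate_succ_apply] at hp
    rw [lemA b c hb, ih (del b c p) hp, Finset.sum_mul,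
      Finset.sum_range_succ' (fun i => Psi b c (sigma b hb ((del b c)^[i] p)) * Yq b c ^ (i + 1)) n,
      Function.iterate_zero_apply, pow_one, add_comm]
    congr 1
    refine Finset.sum_congr rfl fun i _ => ?_
    rw [Function.iterate_succ_apply, mul_assoc, ← pow_succ]

abbrev V (𝕜 : Type*) [Field 𝕜] := ℕ →₀ Polynomial 𝕜

noncomputable def Xhat : V 𝕜 →ₗ[𝕜] V 𝕜 :=
  Finsupp.mapRange.linearMap (LinearMap.mulLeft 𝕜 (X : Polynomial 𝕜))

lemma Xhat_single (k : ℕ) (r : Polynomial 𝕜) :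
    Xhat (Finsupp.single k r) = Finsupp.single k (X * r) := by
  simp [Xhat, Finsupp.mapRange_single, LinearMap.mulLeft_apply]

noncomputable def vkm (k m : ℕ) : V 𝕜 :=
  ∑ i ∈ Finset.range (m + 1),
    Finsupp.single (k + i + 1) (sigma b hb ((del b c)^[i] (X ^ m : Polynomial 𝕜)))

noncomputable def Yc (k : ℕ) : Polynomial 𝕜 →ₗ[𝕜] V 𝕜 :=
  (Finsupp.lsum 𝕜 fun m => LinearMap.toSpanSingleton 𝕜 _ (vkm b c hb k m)).comp
    ((AddMonoidAlgebra.coeffLinearEquiv 𝕜).toLinearMap.comp (toFinsuppIsoAlg 𝕜).toLinearMap)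

noncomputable def Yhat : V 𝕜 →ₗ[𝕜] V 𝕜 := Finsupp.lsum 𝕜 fun k => Yc b c hb k

lemma iter_smul (i : ℕ) (a : 𝕜) (p : Polynomial 𝕜) :
    (del b c)^[i] (a • p) = a • (del b c)^[i] p := by
  rw [← Module.End.pow_apply, ← Module.End.pow_apply, map_smul]

lemma yhat_single_mono (k m : ℕ) (a : 𝕜) :
    Yhat b c hb (Finsupp.single k (monomial m a)) =
      ∑ i ∈ Finset.range (m + 1),
        Finsupp.single (k + i + 1) (sigma b hb ((del b c)^[i] (monomial m a))) := by
  rw [Yhat, Finsupp.lsum_single]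
  have h1 : AddMonoidAlgebra.coeffLinearEquiv 𝕜 ((toFinsuppIsoAlg 𝕜) (monomial m a)) = Finsupp.single m a := by
    simp [toFinsuppIsoAlg, toFinsuppIso, toFinsupp_monomial, AddMonoidAlgebra.coeffLinearEquiv_apply]
  rw [Yc, LinearMap.comp_apply]
  refine Eq.trans (congrArg _ h1) ?_
  rw [Finsupp.lsum_single, LinearMap.toSpanSingleton_apply, vkm, Finset.smul_sum]
  refine Finset.sum_congr rfl fun i _ => ?_
  rw [Finsupp.smul_single, ← map_smul, ← iter_smul, smul_eq_C_mul, C_mul_X_pow_eq_monomial]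

lemma yhat_sum_stable (k : ℕ) (p : Polynomial 𝕜) {n n' : ℕ} (h : (del b c)^[n] p = 0)
    (hn : n ≤ n') :
    ∑ i ∈ Finset.range n', Finsupp.single (k + i + 1) (sigma b hb ((del b c)^[i] p)) =
    ∑ i ∈ Finset.range n, Finsupp.single (k + i + 1) (sigma b hb ((del b c)^[i] p)) := by
  symm
  refine Finset.sum_subset (Finset.range_subset_range.mpr hn) fun i _ hi => ?_
  rw [Finset.mem_range, not_lt] at hi
  rw [del_iterate_zero_of_le b c h hi, map_zero, Finsupp.single_zero]

lemma yhat_single (k : ℕ) (p : Polynomial 𝕜) {n : ℕ} (h : (del b c)^[n] p = 0) :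
    Yhat b c hb (Finsupp.single k p) =
      ∑ i ∈ Finset.range n, Finsupp.single (k + i + 1) (sigma b hb ((del b c)^[i] p)) := by
  have main : Yhat b c hb (Finsupp.single k p) =
      ∑ i ∈ Finset.range (p.natDegree + 1),
        Finsupp.single (k + i + 1) (sigma b hb ((del b c)^[i] p)) := by
    clear h n
    induction p using Polynomial.induction_on' with
    | monomial m a =>
      rw [yhat_single_mono]
      exact yhat_sum_stable b c hb k _ (n' := m + 1) (del_iterate_zero' b c _)
        (Nat.succ_le_succ (natDegree_monomial_le a))
    | add p q hp hq =>
      have h1 : p.natDegree + 1 ≤ max p.natDegree q.natDegree + 1 := by omega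
      have h2 : q.natDegree + 1 ≤ max p.natDegree q.natDegree + 1 := by omega
      have h3 : (p + q).natDegree + 1 ≤ max p.natDegree q.natDegree + 1 :=
        Nat.succ_le_succ (natDegree_add_le p q)
      rw [Finsupp.single_add, map_add, hp, hq,
        ← yhat_sum_stable b c hb k p (del_iterate_zero' b c p) h1,
        ← yhat_sum_stable b c hb k q (del_iterate_zero' b c q) h2,
        ← Finset.sum_add_distrib,
        ← yhat_sum_stable b c hb k (p + q) (del_iterate_zero' b c (p + q)) h3]
      refine Finset.sum_congr rfl fun i _ => ?_
      have h4 : (del b c)^[i] (p + q) = (del b c)^[i] p + (del b c)^[i] q := by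
        rw [← Module.End.pow_apply, ← Module.End.pow_apply, ← Module.End.pow_apply, map_add]
      rw [h4, map_add, Finsupp.single_add]
  rw [main]
  exact (yhat_sum_stable b c hb k p (del_iterate_zero' b c p)
      (le_max_right n _)).symm.trans
    (yhat_sum_stable b c hb k p h (le_max_left n _))

lemma recY (k : ℕ) (p : Polynomial 𝕜) :
    Yhat b c hb (Finsupp.single k p) =
      Finsupp.single (k + 1) (sigma b hb p) +
        Yhat b c hb (Finsupp.single (k + 1) (del b c p)) := by
  have h0 : (del b c)^[p.natDegree + 1] p = 0 := del_iterate_zero' b c p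
  have h1 : (del b c)^[p.natDegree + 1 + 1] p = 0 :=
    del_iterate_zero_of_le b c h0 (Nat.le_succ _)
  have h2 : (del b c)^[p.natDegree + 1] (del b c p) = 0 := by
    rw [← Function.iterate_succ_apply]; exact h1
  rw [yhat_single b c hb k p h1, yhat_single b c hb (k + 1) (del b c p) h2,
    Finset.sum_range_succ' (fun i => Finsupp.single (k + i + 1)
      (sigma b hb ((del b c)^[i] p))) (p.natDegree + 1)]
  rw [add_comm]
  congr 1
  refine Finset.sum_congr rfl fun i _ => ?_
  rw [Function.iterate_succ_apply]
  congr 1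
  omega

lemma smul_single' (k : ℕ) (a : 𝕜) (p : Polynomial 𝕜) :
    Finsupp.single k (C a * p) = a • Finsupp.single k p := by
  rw [Finsupp.smul_single, smul_eq_C_mul]

lemma opRel (n : ℕ) : ∀ (p : Polynomial 𝕜), (del b c)^[n] p = 0 → ∀ (k : ℕ),
    Yhat b c hb (Finsupp.single k (X * p)) =
      b • Xhat (Yhat b c hb (Finsupp.single k p)) +
        c • Yhat b c hb (Yhat b c hb (Finsupp.single k p)) := by
  induction n with
  | zero =>
    intro p hp k
    rw [Function.iterate_zero_apply] at hp
    subst hp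
    simp
  | succ n ih =>
    intro p hp k
    rw [Function.iterate_succ_apply] at hp
    -- abbreviations
    set Yh := Yhat b c hb with hYh
    set dp := del b c p with hdp
    have hσ : sigma b hb (X * p) = C b * (X * sigma b hb p) := by
      rw [map_mul, sigma_X, mul_assoc]
    have hδ : del b c (X * p) = C b * (X * dp) + C c * p := by
      rw [del_mul b c hb, sigma_X, del_X, mul_assoc]
    -- LHS expansion
    have hIH := ih dp hp
    have L : Yh (Finsupp.single k (X * p)) =
        b • Finsupp.single (k + 1) (X * sigma b hb p) +
          ((b * b) • Xhat (Yh (Finsupp.single (k + 1) dp)) +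
            (b * c) • Yh (Yh (Finsupp.single (k + 1) dp)) +
            c • Yh (Finsupp.single (k + 1) p)) := by
      rw [recY b c hb k (X * p), hσ, hδ, smul_single']
      rw [Finsupp.single_add, map_add, smul_single', smul_single', map_smul, map_smul,
        hIH (k + 1)]
      rw [smul_add, smul_smul, smul_smul]
    -- RHS expansion
    have keyV : c • Finsupp.single (k + 1) (sigma b hb p) =
        c • Finsupp.single (k + 1) p +
          (b • Finsupp.single (k + 1) (X * dp) - Finsupp.single (k + 1) (X * dp)) := by
      have h1 := congrArg (fun w => Finsupp.single (k + 1) w) (key_identity b c hb p)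
      simp only [mul_sub, sub_mul, one_mul] at h1
      rw [Finsupp.single_sub, Finsupp.single_sub, smul_single', smul_single',
        smul_single'] at h1
      rw [← h1]; abel
    have hY1 : Yh (Finsupp.single k p) =
        Finsupp.single (k + 1) (sigma b hb p) + Yh (Finsupp.single (k + 1) dp) :=
      recY b c hb k p
    have hkv : c • Yh (Finsupp.single (k + 1) (sigma b hb p)) =
        c • Yh (Finsupp.single (k + 1) p) +
          ((b * b) • Xhat (Yh (Finsupp.single (k + 1) dp)) +
            (b * c) • Yh (Yh (Finsupp.single (k + 1) dp)) -
            (b • Xhat (Yh (Finsupp.single (k + 1) dp)) +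
              c • Yh (Yh (Finsupp.single (k + 1) dp)))) := by
      rw [← map_smul, keyV, map_add, map_sub, map_smul, map_smul, hIH (k + 1)]
      module
    rw [L, hY1, map_add, map_add, Xhat_single, smul_add, smul_add, hkv]
    module


noncomputable def rhoF : FreeAlgebra 𝕜 (Fin 2) →ₐ[𝕜] Module.End 𝕜 (V 𝕜) :=
  FreeAlgebra.lift 𝕜 ![(Xhat : Module.End 𝕜 (V 𝕜)), Yhat b c hb]

lemma rhoF_i0 : rhoF b c hb (FreeAlgebra.ι 𝕜 0) = Xhat := by
  rw [rhoF, FreeAlgebra.lift_ι_apply]; rfl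

lemma rhoF_i1 : rhoF b c hb (FreeAlgebra.ι 𝕜 1) = Yhat b c hb := by
  rw [rhoF, FreeAlgebra.lift_ι_apply]; rfl

lemma rhoF_rel : ∀ ⦃x y : FreeAlgebra 𝕜 (Fin 2)⦄, qRel 𝕜 b c x y →
    rhoF b c hb x = rhoF b c hb y := by
  rintro x y ⟨hx, hy⟩
  subst hx; subst hy
  simp only [map_mul, map_add, rhoF_i0, rhoF_i1, AlgHom.commutes]
  refine Finsupp.lhom_ext fun k r => ?_
  rw [Module.End.mul_apply, Xhat_single]
  rw [LinearMap.add_apply, Module.End.mul_apply, Module.End.mul_apply, Module.End.mul_apply,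
    Module.End.mul_apply, Module.algebraMap_end_apply, Module.algebraMap_end_apply]
  exact opRel b c hb _ r (del_iterate_zero' b c r) k

noncomputable def rho : RingQuot (qRel 𝕜 b c) →ₐ[𝕜] Module.End 𝕜 (V 𝕜) :=
  RingQuot.liftAlgHom 𝕜 ⟨rhoF b c hb, rhoF_rel b c hb⟩

lemma rho_X : rho b c hb (Xq b c) = Xhat := by
  rw [rho, Xq, RingQuot.liftAlgHom_mkAlgHom_apply, rhoF_i0]

lemma rho_Y : rho b c hb (Yq b c) = Yhat b c hb := by
  rw [rho, Yq, RingQuot.liftAlgHom_mkAlgHom_apply, rhoF_i1]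

lemma aeval_xhat (r : Polynomial 𝕜) (k : ℕ) (s : Polynomial 𝕜) :
    (aeval (Xhat : Module.End 𝕜 (V 𝕜)) r) (Finsupp.single k s) = Finsupp.single k (r * s) := by
  induction r using Polynomial.induction_on with
  | C a =>
    rw [aeval_C, Module.algebraMap_end_apply, ← smul_single']
  | add p q hp hq =>
    rw [map_add, LinearMap.add_apply, hp, hq, add_mul, Finsupp.single_add]
  | monomial n a hI =>
    have h1 : (C a * X ^ (n + 1) : Polynomial 𝕜) = X * (C a * X ^ n) := by ring
    rw [h1, map_mul, aeval_X, Module.End.mul_apply, hI, Xhat_single]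
    congr 1
    ring

lemma yhat_vac (j : ℕ) : Yhat b c hb (Finsupp.single j 1) = Finsupp.single (j + 1) 1 := by
  have h1 : (del b c)^[1] (1 : Polynomial 𝕜) = 0 := by
    rw [Function.iterate_one, del_one]
  rw [yhat_single b c hb j 1 h1, Finset.sum_range_one, Function.iterate_zero_apply, map_one]

lemma yhat_pow_vac (k : ℕ) :
    (Yhat b c hb ^ k) (Finsupp.single 0 1) = Finsupp.single k 1 := by
  induction k with
  | zero => rw [pow_zero, Module.End.one_apply]
  | succ k ih => rw [pow_succ', Module.End.mul_apply, ih, yhat_vac]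

noncomputable def PhiMap : (ℕ →₀ Polynomial 𝕜) → RingQuot (qRel 𝕜 b c) :=
  fun f => f.sum fun k r => Psi b c r * Yq b c ^ k

lemma Phi_single (k : ℕ) (r : Polynomial 𝕜) :
    PhiMap b c (Finsupp.single k r) = Psi b c r * Yq b c ^ k :=
  Finsupp.sum_single_index (by rw [map_zero, zero_mul])

lemma Phi_add (f g : ℕ →₀ Polynomial 𝕜) :
    PhiMap b c (f + g) = PhiMap b c f + PhiMap b c g :=
  Finsupp.sum_add_index' (fun k => by rw [map_zero, zero_mul])
    (fun k r s => by rw [map_add, add_mul])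

lemma rho_eval (f : ℕ →₀ Polynomial 𝕜) :
    rho b c hb (PhiMap b c f) (Finsupp.single 0 1) = f := by
  have key : ∀ k r, rho b c hb (Psi b c r * Yq b c ^ k) (Finsupp.single 0 1)
      = Finsupp.single k r := by
    intro k r
    have e : rho b c hb (Psi b c r) = aeval (Xhat : Module.End 𝕜 (V 𝕜)) r := by
      rw [show Psi b c r = aeval (Xq b c) r from rfl,
        ← Polynomial.aeval_algHom_apply (rho b c hb) (Xq b c) r, rho_X]
    rw [map_mul, map_pow, rho_Y, e, Module.End.mul_apply, yhat_pow_vac, aeval_xhat, mul_one]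
  rw [PhiMap, map_finsuppSum, Finsupp.sum, LinearMap.sum_apply]
  simp only [key]
  exact Finsupp.sum_single f

lemma Phi_inj (hb : b ≠ 0) : Function.Injective (PhiMap b c (𝕜 := 𝕜)) := by
  intro f g h
  have h2 := congrArg (fun q => rho b c hb q (Finsupp.single 0 1)) h
  simpa only [rho_eval] using h2


noncomputable def MR : AddSubmonoid (RingQuot (qRel 𝕜 b c)) where
  carrier := Set.range (PhiMap b c)
  zero_mem' := ⟨0, by simp [PhiMap]⟩
  add_mem' := by
    rintro _ _ ⟨f, rfl⟩ ⟨g, rfl⟩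
    exact ⟨f + g, Phi_add b c f g⟩

lemma claim1 : ∀ u ∈ MR b c, ∀ (r : Polynomial 𝕜) (l : ℕ),
    Psi b c r * u * Yq b c ^ l ∈ MR b c := by
  rintro _ ⟨f, rfl⟩ r l
  rw [PhiMap, Finsupp.sum, Finset.mul_sum, Finset.sum_mul]
  refine AddSubmonoid.sum_mem _ fun k _ => ?_
  have e : Psi b c r * (Psi b c (f k) * Yq b c ^ k) * Yq b c ^ l
      = Psi b c (r * f k) * Yq b c ^ (k + l) := by
    rw [map_mul, pow_add, mul_assoc, mul_assoc, mul_assoc]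
  rw [e]
  exact ⟨Finsupp.single (k + l) (r * f k), Phi_single b c _ _⟩

lemma claim1' : ∀ u ∈ MR b c, ∀ l : ℕ, u * Yq b c ^ l ∈ MR b c := by
  intro u hu l
  have := claim1 b c u hu 1 l
  rwa [map_one, one_mul] at this

lemma claim2 (hb : b ≠ 0) (k : ℕ) (s : Polynomial 𝕜) : Yq b c ^ k * Psi b c s ∈ MR b c := by
  induction k generalizing s with
  | zero =>
    rw [pow_zero, one_mul]
    exact ⟨Finsupp.single 0 s, by rw [Phi_single, pow_zero, mul_one]⟩
  | succ k ih =>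
    rw [pow_succ, mul_assoc, commQ b c hb (s.natDegree + 1) s (del_iterate_zero' b c s),
      Finset.mul_sum]
    refine AddSubmonoid.sum_mem _ fun i _ => ?_
    rw [← mul_assoc]
    exact claim1' b c _ (ih _) _

lemma claim2' (hb : b ≠ 0) (k : ℕ) : ∀ v ∈ MR b c, Yq b c ^ k * v ∈ MR b c := by
  rintro _ ⟨g, rfl⟩
  rw [PhiMap, Finsupp.sum, Finset.mul_sum]
  refine AddSubmonoid.sum_mem _ fun l _ => ?_
  rw [← mul_assoc]
  exact claim1' b c _ (claim2 b c hb k (g l)) _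

lemma claim3 (hb : b ≠ 0) : ∀ u ∈ MR b c, ∀ v ∈ MR b c, u * v ∈ MR b c := by
  rintro _ ⟨f, rfl⟩ v hv
  rw [PhiMap, Finsupp.sum, Finset.sum_mul]
  refine AddSubmonoid.sum_mem _ fun k _ => ?_
  have e : Psi b c (f k) * Yq b c ^ k * v = Psi b c (f k) * (Yq b c ^ k * v) * Yq b c ^ 0 := by
    rw [pow_zero, mul_one, mul_assoc]
  rw [e]
  exact claim1 b c _ (claim2' b c hb k v hv) _ _

lemma Phi_surj (hb : b ≠ 0) : Function.Surjective (PhiMap b c (𝕜 := 𝕜)) := by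
  intro q
  suffices h : q ∈ MR b c from h
  obtain ⟨w, rfl⟩ := RingQuot.mkAlgHom_surjective 𝕜 (qRel 𝕜 b c) q
  induction w using FreeAlgebra.induction with
  | grade0 a =>
    refine ⟨Finsupp.single 0 (C a), ?_⟩
    rw [Phi_single, pow_zero, mul_one, AlgHom.commutes]
    exact (Psi_C b c a)
  | grade1 i =>
    match i with
    | 0 =>
      refine ⟨Finsupp.single 0 (X : Polynomial 𝕜), ?_⟩
      rw [Phi_single, pow_zero, mul_one]
      exact aeval_X _
    | 1 =>
      refine ⟨Finsupp.single 1 (1 : Polynomial 𝕜), ?_⟩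
      rw [Phi_single, pow_one, map_one, one_mul]
  | mul x y hx hy =>
    rw [map_mul]
    exact claim3 b c hb _ hx _ hy
  | add x y hx hy =>
    rw [map_add]
    exact AddSubmonoid.add_mem _ hx hy

end Aux

/-- `Q(0,b,c)` with `b ≠ 0` over a field of characteristic zero: `σ(x) = b x`
extends to an automorphism of `𝕜[x]`, `δ(x) = c` extends to a locally
nilpotent `σ`-derivation, and `Q(0,b,c)` is (isomorphic to) the skew Ore
polynomial ring `𝕜[x](y;σ,δ)`, via `x ↦ ι 0` and `y ↦ ι 1`. -/
theorem stmt19 (𝕜 : Type*) [Field 𝕜] [CharZero 𝕜] (b c : 𝕜) (hb : b ≠ 0) :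
    ∃ (σ : Polynomial 𝕜 ≃ₐ[𝕜] Polynomial 𝕜) (δ : Polynomial 𝕜 → Polynomial 𝕜),
      σ X = C b * X ∧ δ X = C c ∧
      (∀ p q : Polynomial 𝕜, δ (p + q) = δ p + δ q) ∧
      (∀ p q : Polynomial 𝕜, δ (p * q) = σ p * δ q + δ p * q) ∧
      (∀ p : Polynomial 𝕜, ∃ n : ℕ, δ^[n] p = 0) ∧
      ∃ S : SkewOreRing (Polynomial 𝕜) (RingQuot (qRel 𝕜 b c)) σ.toRingEquiv δ,
        (∀ a : 𝕜, S.φ (C a) = algebraMap 𝕜 (RingQuot (qRel 𝕜 b c)) a) ∧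
        S.φ X = RingQuot.mkRingHom (qRel 𝕜 b c) (FreeAlgebra.ι 𝕜 0) ∧
        S.x = RingQuot.mkRingHom (qRel 𝕜 b c) (FreeAlgebra.ι 𝕜 1) := by
  refine ⟨sigma b hb, ⇑(del b c), sigma_X b hb, del_X b c,
    fun p q => map_add _ p q, fun p q => del_mul b c hb p q,
    fun p => ⟨p.natDegree + 1, del_iterate_zero' b c p⟩, ?_⟩
  refine ⟨⟨(Psi b c).toRingHom, Yq b c,
    fun r s => map_add _ r s,
    fun r s => del_mul b c hb r s,
    fun r => ⟨r.natDegree + 1, Nat.succ_le_succ (Nat.zero_le _), del_iterate_zero' b c r⟩,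
    ⟨Phi_inj b c hb, Phi_surj b c hb⟩,
    fun r n hn => commQ b c hb n r hn⟩, ?_, ?_, ?_⟩
  · exact fun a => Psi_C b c a
  · show Psi b c X = RingQuot.mkRingHom (qRel 𝕜 b c) (FreeAlgebra.ι 𝕜 0)
    rw [← RingQuot.mkAlgHom_coe 𝕜]
    exact aeval_X _
  · show Yq b c = RingQuot.mkRingHom (qRel 𝕜 b c) (FreeAlgebra.ι 𝕜 1)
    rw [← RingQuot.mkAlgHom_coe 𝕜]
    rfl
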